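/- Let K be a field of characteristic 0, let a, b, c ∈ K be algebraically independent over ℚ, and let d = (1 - a·c)/b. Suppose c₁ ∈ K is transcendental over ℚ(a, b, c) and d₁ ∈ K satisfies a·c₁ + b·d₁ = 1. Then the four elements c, d, c₁, d₁ are algebraically independent over ℚ, and a and b belong to the subfield ℚ(c, d, c₁, d₁). -/

import Mathlib

open MvPolynomial

/-- Transfer algebraicity from a subalgebra to a subfield containing it. -/
lemma isAlgebraic_subfield_of_subalgebra {K : Type*} [Field K] [CharZero K]
    (A : Subalgebra ℚ K) (T : Subfield K) (h : (A : Set K) ⊆ (T : Set K)) {x : K}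
    (hx : IsAlgebraic A x) : IsAlgebraic T x := by
  obtain ⟨p, hp0, hpe⟩ := hx
  let j : A →+* T :=
    { toFun := fun a => ⟨a.1, h a.2⟩
      map_one' := rfl
      map_mul' := fun _ _ => rfl
      map_zero' := rfl
      map_add' := fun _ _ => rfl }
  have hj : Function.Injective j := by
    intro u v huv
    have h2 : ((j u : T) : K) = ((j v : T) : K) := congrArg Subtype.val huv
    exact Subtype.ext h2
  refine ⟨p.map j, fun h0 => hp0 (Polynomial.map_injective j hj (by simpa using h0)), ?_⟩
  rw [Polynomial.aeval_def, Polynomial.eval₂_map]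
  have : (algebraMap T K).comp j = algebraMap A K := rfl
  rw [this, ← Polynomial.aeval_def]
  exact hpe

/-- The 'moreover' clause of Fact 3.5: if `a, b, c` are algebraically independent over
`ℚ`, `d = (1 - a·c)/b`, `c₁` is transcendental over `ℚ(a, b, c)` and `a·c₁ + b·d₁ = 1`,
then `c, d, c₁, d₁` are algebraically independent over `ℚ` and `a, b ∈ ℚ(c, d, c₁, d₁)`. -/
theorem independent_realizations_determine_ab {K : Type*} [Field K] [CharZero K]
    (a b c : K) (hind : AlgebraicIndependent ℚ ![a, b, c])
    (d : K) (hd : d = (1 - a * c) / b)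
    (c₁ : K) (hc₁ : Transcendental (Subfield.closure ({a, b, c} : Set K)) c₁)
    (d₁ : K) (hd₁ : a * c₁ + b * d₁ = 1) :
    AlgebraicIndependent ℚ ![c, d, c₁, d₁] ∧
    a ∈ Subfield.closure ({c, d, c₁, d₁} : Set K) ∧
    b ∈ Subfield.closure ({c, d, c₁, d₁} : Set K) := by
  have hb : b ≠ 0 := by simpa using hind.ne_zero 1
  have h1 : a * c + b * d = 1 := by
    rw [hd]; field_simp; ring
  -- c ≠ c₁
  have hcc₁ : c ≠ c₁ := by
    intro h
    apply hc₁
    have hmem : c₁ ∈ Subfield.closure ({a, b, c} : Set K) := by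
      rw [← h]; exact Subfield.subset_closure (by simp)
    have : c₁ = algebraMap (Subfield.closure ({a, b, c} : Set K)) K ⟨c₁, hmem⟩ := rfl
    rw [this]
    exact isAlgebraic_algebraMap _
  -- the determinant
  have hΔb : b * (c * d₁ - c₁ * d) = c - c₁ := by linear_combination c * hd₁ - c₁ * h1
  have hΔ : c * d₁ - c₁ * d ≠ 0 := by
    intro h
    apply sub_ne_zero.mpr hcc₁
    rw [← hΔb, h, mul_zero]
  have ha2 : a = (d₁ - d) / (c * d₁ - c₁ * d) := by
    rw [eq_div_iff hΔ]; linear_combination d₁ * h1 - d * hd₁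
  have hb2 : b = (c - c₁) / (c * d₁ - c₁ * d) := by
    rw [eq_div_iff hΔ]; linear_combination hΔb
  -- memberships
  have mc : c ∈ Subfield.closure ({c, d, c₁, d₁} : Set K) := Subfield.subset_closure (by simp)
  have md : d ∈ Subfield.closure ({c, d, c₁, d₁} : Set K) := Subfield.subset_closure (by simp)
  have mc₁ : c₁ ∈ Subfield.closure ({c, d, c₁, d₁} : Set K) := Subfield.subset_closure (by simp)
  have md₁ : d₁ ∈ Subfield.closure ({c, d, c₁, d₁} : Set K) := Subfield.subset_closure (by simp)
  have hamem : a ∈ Subfield.closure ({c, d, c₁, d₁} : Set K) := by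
    rw [ha2]
    exact div_mem (sub_mem md₁ md) (sub_mem (mul_mem mc md₁) (mul_mem mc₁ md))
  have hbmem : b ∈ Subfield.closure ({c, d, c₁, d₁} : Set K) := by
    rw [hb2]
    exact div_mem (sub_mem mc mc₁) (sub_mem (mul_mem mc md₁) (mul_mem mc₁ md))
  refine ⟨?_, hamem, hbmem⟩
  -- step 1 : a, b, c, c₁ are algebraically independent
  have hrange : Set.range ![a, b, c] = {a, b, c} := by
    ext x
    simp [Fin.exists_fin_succ, Matrix.cons_val_zero, Matrix.cons_val_one]
    tauto
  have hc₁' : Transcendental (Algebra.adjoin ℚ (Set.range ![a, b, c])) c₁ := by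
    intro halg
    apply hc₁
    refine isAlgebraic_subfield_of_subalgebra _ _ ?_ halg
    intro z hz
    induction hz using Algebra.adjoin_induction with
    | mem x hx => exact Subfield.subset_closure (hrange ▸ hx)
    | algebraMap r =>
      rw [eq_ratCast (algebraMap ℚ K) r]
      exact SubfieldClass.ratCast_mem _ r
    | add x y _ _ hx hy => exact add_mem hx hy
    | mul x y _ _ hx hy => exact mul_mem hx hy
  have h3 : AlgebraicIndependent ℚ (fun o : Option (Fin 3) => o.elim c₁ ![a, b, c]) :=
    (hind.option_iff_transcendental c₁).2 hc₁'
  have h4' : AlgebraicIndependent ℚ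
      ((fun o : Option (Fin 3) => o.elim c₁ ![a, b, c]) ∘ (finSuccEquiv 3)) :=
    (algebraicIndependent_equiv (finSuccEquiv 3)).2 h3
  have H4 : AlgebraicIndependent ℚ ![a, b, c, c₁] := by
    refine (algebraicIndependent_equiv' (finRotate 4) ?_).2 h4'
    funext i
    fin_cases i <;> rfl
  -- step 2 : main argument via localization
  set R := MvPolynomial (Fin 4) ℚ with hR
  suffices hinj : ∀ p : R, MvPolynomial.aeval ![c, d, c₁, d₁] p = 0 → p = 0 by
    rw [algebraicIndependent_iff]
    exact fun p hp => hinj p hp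
  intro p hp
  set S := Localization.Away (X 1 : R) with hS
  set ib : S := IsLocalization.Away.invSelf (S := S) (X 1 : R) with hib
  set v : Fin 4 → S := ![algebraMap R S (X 2),
    (1 - algebraMap R S (X 0) * algebraMap R S (X 2)) * ib,
    algebraMap R S (X 3),
    (1 - algebraMap R S (X 0) * algebraMap R S (X 3)) * ib] with hv
  set Φ : R →+* S := eval₂Hom ((algebraMap R S).comp MvPolynomial.C) v with hΦ
  -- the evaluation map ε : S → K
  have hbu : IsUnit ((MvPolynomial.aeval ![a, b, c, c₁] : R →ₐ[ℚ] K).toRingHom (X 1)) := by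
    simp only [AlgHom.toRingHom_eq_coe, RingHom.coe_coe, aeval_X]
    exact isUnit_iff_ne_zero.2 (by simpa using hb)
  set ε : S →+* K := IsLocalization.Away.lift (g := (MvPolynomial.aeval ![a, b, c, c₁] :
    R →ₐ[ℚ] K).toRingHom) (X 1) hbu with hε
  have hεm : ∀ r : R, ε (algebraMap R S r) = MvPolynomial.aeval ![a, b, c, c₁] r := fun r =>
    IsLocalization.Away.lift_eq (X 1) hbu r
  have hεib : ε ib = b⁻¹ := by
    have h0 : algebraMap R S (X 1) * ib = 1 := IsLocalization.Away.mul_invSelf (X 1)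
    have h1' : ε (algebraMap R S (X 1)) * ε ib = 1 := by
      rw [← map_mul, h0, map_one]
    rw [hεm] at h1'
    simp only [aeval_X, Matrix.cons_val_one, Matrix.head_cons] at h1'
    exact (inv_eq_of_mul_eq_one_right h1').symm
  have hv0 : ε (v 0) = c := by simp [hv, hεm]
  have hv1 : ε (v 1) = d := by
    simp only [hv, Matrix.cons_val_one, Matrix.head_cons, map_mul, map_sub, map_one, hεm, hεib,
      aeval_X, Matrix.cons_val_zero, Matrix.cons_val_two, Matrix.tail_cons]
    rw [hd, div_eq_mul_inv]
  have hv2 : ε (v 2) = c₁ := by simp [hv, hεm]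
  have hv3 : ε (v 3) = d₁ := by
    simp only [hv, Matrix.cons_val_three, Matrix.head_cons, map_mul, map_sub, map_one, hεm, hεib,
      aeval_X, Matrix.cons_val_zero, Matrix.cons_val_fin_one, Matrix.tail_cons, Matrix.cons_val_two]
    field_simp
    linear_combination -hd₁
  -- ε ∘ Φ = evaluation at (c, d, c₁, d₁)
  have hεΦ : ∀ r : R, ε (Φ r) = MvPolynomial.aeval ![c, d, c₁, d₁] r := by
    have hcomp : ε.comp Φ = (MvPolynomial.aeval ![c, d, c₁, d₁] : R →ₐ[ℚ] K).toRingHom := by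
      apply MvPolynomial.ringHom_ext
      · intro r
        exact RingHom.congr_fun (Subsingleton.elim ((ε.comp Φ).comp MvPolynomial.C)
          (((MvPolynomial.aeval ![c, d, c₁, d₁] : R →ₐ[ℚ] K).toRingHom).comp MvPolynomial.C)) r
      · intro i
        have : ε (Φ (X i)) = ε (v i) := by rw [hΦ, eval₂Hom_X']
        show ε (Φ (X i)) = MvPolynomial.aeval ![c, d, c₁, d₁] (X i)
        rw [this, aeval_X]
        fin_cases i
        · exact hv0
        · exact hv1
        · exact hv2
        · exact hv3
    exact fun r => RingHom.congr_fun hcomp r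
  -- the fraction field F₂ and the backward evaluation ρ
  set F₂ := FractionRing R with hF₂
  set ι : R →+* F₂ := algebraMap R F₂ with hι'
  have hιinj : Function.Injective ι := IsFractionRing.injective R F₂
  set pi : Fin 4 → F₂ := fun i => ι (X i) with hpi
  have hne : ∀ (w : Fin 4 → ℚ) (r : R), MvPolynomial.eval w r ≠ 0 → ι r ≠ 0 := by
    intro w r hr h0
    exact hr (by rw [show r = 0 from hιinj (by rw [h0, map_zero])]; simp)
  have hΔ₂ : pi 0 * pi 3 - pi 2 * pi 1 ≠ 0 := by
    have : ι (X 0 * X 3 - X 2 * X 1) ≠ 0 := by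
      apply hne ![1, 0, 1, 1]; simp
    simpa [map_mul, map_sub, hpi] using this
  have hγ : pi 0 - pi 2 ≠ 0 := by
    have : ι (X 0 - X 2 : R) ≠ 0 := by
      apply hne ![1, 0, 0, 0]; simp
    simpa [map_sub, hpi] using this
  set α : F₂ := (pi 3 - pi 1) / (pi 0 * pi 3 - pi 2 * pi 1) with hα
  set β : F₂ := (pi 0 - pi 2) / (pi 0 * pi 3 - pi 2 * pi 1) with hβdef
  have hβ : β ≠ 0 := div_ne_zero hγ hΔ₂
  set g₂ : R →+* F₂ := eval₂Hom (ι.comp MvPolynomial.C) ![α, β, pi 0, pi 2] with hg₂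
  have hg₂1 : g₂ (X 1) = β := by rw [hg₂, eval₂Hom_X']; simp
  have hβu : IsUnit (g₂ (X 1)) := by rw [hg₂1]; exact isUnit_iff_ne_zero.2 hβ
  set ρ : S →+* F₂ := IsLocalization.Away.lift (g := g₂) (X 1) hβu with hρ
  have hρm : ∀ r : R, ρ (algebraMap R S r) = g₂ r := fun r =>
    IsLocalization.Away.lift_eq (X 1) hβu r
  have hρib : ρ ib = β⁻¹ := by
    have h0 : algebraMap R S (X 1) * ib = 1 := IsLocalization.Away.mul_invSelf (X 1)
    have h1' : ρ (algebraMap R S (X 1)) * ρ ib = 1 := by rw [← map_mul, h0, map_one]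
    rw [hρm, hg₂1] at h1'
    exact (inv_eq_of_mul_eq_one_right h1').symm
  have hg₂0 : g₂ (X 0) = α := by rw [hg₂, eval₂Hom_X']; simp
  have hg₂2 : g₂ (X 2) = pi 0 := by rw [hg₂, eval₂Hom_X']; simp
  have hg₂3 : g₂ (X 3) = pi 2 := by rw [hg₂, eval₂Hom_X']; simp
  have hw0 : ρ (v 0) = pi 0 := by
    simp only [hv, Matrix.cons_val_zero, hρm, hg₂2]
  have hw1 : ρ (v 1) = pi 1 := by
    simp only [hv, Matrix.cons_val_one, Matrix.head_cons, map_mul, map_sub, map_one,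
      hρm, hρib, hg₂0, hg₂2, Matrix.cons_val_zero]
    rw [hα, hβdef]
    rw [div_mul_eq_mul_div, one_sub_div hΔ₂, inv_div, div_mul_div_cancel₀ hΔ₂, div_eq_iff hγ]
    ring
  have hw2 : ρ (v 2) = pi 2 := by
    simp only [hv, Matrix.cons_val_two, Matrix.tail_cons, Matrix.head_cons, hρm, hg₂3]
  have hw3 : ρ (v 3) = pi 3 := by
    simp only [hv, Matrix.cons_val_three, Matrix.tail_cons, Matrix.head_cons, map_mul,
      map_sub, map_one, hρm, hρib, hg₂0, hg₂3, Matrix.cons_val_zero, Matrix.cons_val_one]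
    rw [hα, hβdef]
    rw [div_mul_eq_mul_div, one_sub_div hΔ₂, inv_div, div_mul_div_cancel₀ hΔ₂, div_eq_iff hγ]
    ring
  -- ρ ∘ Φ = ι
  have hρΦ : ∀ r : R, ρ (Φ r) = ι r := by
    have hcomp : ρ.comp Φ = ι := by
      apply MvPolynomial.ringHom_ext
      · intro r
        exact RingHom.congr_fun (Subsingleton.elim ((ρ.comp Φ).comp MvPolynomial.C)
          (ι.comp MvPolynomial.C)) r
      · intro i
        have : ρ (Φ (X i)) = ρ (v i) := by rw [hΦ, eval₂Hom_X']
        show ρ (Φ (X i)) = ι (X i)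
        rw [this]
        fin_cases i
        · exact hw0
        · exact hw1
        · exact hw2
        · exact hw3
    exact fun r => RingHom.congr_fun hcomp r
  -- conclude
  have hspec := IsLocalization.Away.sec_spec (X 1 : R) (Φ p)
  set q : R := (IsLocalization.Away.sec (X 1 : R) (Φ p)).1 with hq
  set N : ℕ := (IsLocalization.Away.sec (X 1 : R) (Φ p)).2 with hN
  have hq0 : q = 0 := by
    apply H4.eq_zero_of_aeval_eq_zero
    have := congrArg ε hspec
    rw [map_mul, hεΦ, hεm, hεm, hp, zero_mul] at this
    exact this.symm
  have hfin := congrArg ρ hspec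
  rw [map_mul, hρΦ, hρm, hρm, hq0, map_zero, map_pow, hg₂1] at hfin
  have : ι p = 0 := by
    rcases mul_eq_zero.1 hfin with h | h
    · exact h
    · exact absurd h (pow_ne_zero N hβ)
  exact hιinj (by rw [this, map_zero])
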